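/- Let E = {z ∈ ℂ : |z| ≤ 1} be the closed unit disk and Γ = {z : |z − 1| = R} with R > 2, so that E lies inside the disk bounded by Γ. Then for each n, the monomial p(z) = z^n satisfies ||p||_E / ||p||_Γ = 1/(R+1)^n, and lim_{n→∞} (inf_{p ∈ P_n, p ≠ 0} ||p||_E / ||p||_Γ)^{1/n} = 1/(R+1). -/

import Mathlib

open Polynomial Filter

/-- Sup norm of a polynomial on a set `K`. -/
noncomputable def polySupNorm (K : Set ℂ) (p : Polynomial ℂ) : ℝ :=
  sSup ((fun z => ‖p.eval z‖) '' K)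

lemma polySupNorm_bddAbove (K : Set ℂ) (hK : IsCompact K) (p : Polynomial ℂ) :
    BddAbove ((fun z => ‖p.eval z‖) '' K) :=
  (hK.image (continuous_norm.comp p.continuous)).bddAbove

lemma le_polySupNorm {K : Set ℂ} (hK : IsCompact K) (p : Polynomial ℂ) {z : ℂ} (hz : z ∈ K) :
    ‖p.eval z‖ ≤ polySupNorm K p :=
  le_csSup (polySupNorm_bddAbove K hK p) ⟨z, hz, rfl⟩

lemma polySupNorm_pos {K : Set ℂ} (hK : IsCompact K) (hKinf : K.Infinite)
    {p : Polynomial ℂ} (hp : p ≠ 0) : 0 < polySupNorm K p := by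
  obtain ⟨z, hzK, hzr⟩ := (hKinf.diff (p.finite_setOf_isRoot hp)).nonempty
  have hz : p.eval z ≠ 0 := hzr
  calc (0:ℝ) < ‖p.eval z‖ := by simpa using hz
    _ ≤ _ := le_polySupNorm hK p hzK

lemma sphere_infinite (c : ℂ) {r : ℝ} (hr : 0 < r) : (Metric.sphere c r).Infinite := by
  have hmaps : ∀ t ∈ Set.Ioo (0:ℝ) Real.pi,
      c + r * Complex.exp (t * Complex.I) ∈ Metric.sphere c r := by
    intro t _
    simp only [Metric.mem_sphere, dist_eq_norm]
    have : c + r * Complex.exp (t * Complex.I) - c = r * Complex.exp (t * Complex.I) := by ring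
    rw [this, norm_mul, Complex.norm_real, Real.norm_of_nonneg hr.le]
    rw [Complex.norm_exp]
    simp [Complex.mul_I_re, mul_one]
  have hinj : Set.InjOn (fun t : ℝ => c + r * Complex.exp (t * Complex.I))
      (Set.Ioo (0:ℝ) Real.pi) := by
    intro a ha b hb hab
    simp only at hab
    have h1 : Complex.exp (a * Complex.I) = Complex.exp (b * Complex.I) := by
      have hr0 : (r : ℂ) ≠ 0 := by exact_mod_cast hr.ne'
      exact mul_left_cancel₀ hr0 (add_left_cancel hab)
    rw [Complex.exp_eq_exp_iff_exists_int] at h1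
    obtain ⟨k, hk⟩ := h1
    have : (a : ℂ) = b + k * (2 * Real.pi) := by
      have hI : Complex.I ≠ 0 := Complex.I_ne_zero
      have := hk
      field_simp at this ⊢
      have h2 : (a : ℂ) * Complex.I = (b + k * (2 * Real.pi)) * Complex.I := by
        rw [hk]; ring
      exact (mul_right_cancel₀ hI h2).trans (by ring)
    have hab' : a = b + k * (2 * Real.pi) := by exact_mod_cast this
    have hpi : 0 < Real.pi := Real.pi_pos
    have hk0 : k = 0 := by
      rcases lt_trichotomy (k:ℝ) 0 with h | h | h
      · have hki : k < 0 := by exact_mod_cast h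
        have hki' : k ≤ -1 := by omega
        have : (k:ℝ) ≤ -1 := by exact_mod_cast hki'
        nlinarith [ha.1, ha.2, hb.1, hb.2]
      · exact_mod_cast h
      · have hki : 0 < k := by exact_mod_cast h
        have hki' : 1 ≤ k := by omega
        have : (1:ℝ) ≤ k := by exact_mod_cast hki'
        nlinarith [ha.1, ha.2, hb.1, hb.2]
    rw [hk0] at hab'
    simpa using hab'
  have : ((fun t : ℝ => c + r * Complex.exp (t * Complex.I)) '' Set.Ioo 0 Real.pi).Infinite :=
    (Set.Ioo_infinite Real.pi_pos).image hinj
  exact this.mono (Set.image_subset_iff.mpr fun t ht => hmaps t ht)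

lemma closedBall_infinite : (Metric.closedBall (0:ℂ) 1).Infinite := by
  have : Metric.sphere (0:ℂ) 1 ⊆ Metric.closedBall (0:ℂ) 1 := Metric.sphere_subset_closedBall
  exact (sphere_infinite 0 one_pos).mono this

lemma dft_coeff (p : Polynomial ℂ) {m k : ℕ} (hm : p.natDegree < m) (hk : k < m)
    {ζ : ℂ} (hζ : IsPrimitiveRoot ζ m) :
    (m : ℂ) * p.coeff k = ∑ j ∈ Finset.range m, p.eval (ζ ^ j) * ζ ^ (-((j * k : ℕ) : ℤ)) := by
  have hmpos : 0 < m := lt_of_le_of_lt (Nat.zero_le _) hk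
  have hζ0 : ζ ≠ 0 := hζ.ne_zero hmpos.ne'
  have key : ∀ j ∈ Finset.range m, p.eval (ζ ^ j) * ζ ^ (-((j * k : ℕ) : ℤ))
      = ∑ l ∈ Finset.range m, p.coeff l * (ζ ^ (((l : ℤ) - k))) ^ j := by
    intro j _
    rw [eval_eq_sum_range' hm, Finset.sum_mul]
    refine Finset.sum_congr rfl fun l _ => ?_
    rw [mul_assoc]
    congr 1
    rw [show ((ζ:ℂ) ^ j) ^ l = ζ ^ (j * l : ℕ) by rw [← pow_mul],
      ← zpow_natCast ζ (j * l), ← zpow_add₀ hζ0,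
      show (ζ ^ ((l:ℤ) - k)) ^ j = ζ ^ (((l:ℤ) - k) * j) by rw [zpow_mul, zpow_natCast]]
    congr 1
    push_cast
    ring
  rw [Finset.sum_congr rfl key, Finset.sum_comm]
  have inner : ∀ l ∈ Finset.range m, ∑ j ∈ Finset.range m, p.coeff l * (ζ ^ ((l : ℤ) - k)) ^ j
      = p.coeff l * (if l = k then (m : ℂ) else 0) := by
    intro l hl
    rw [← Finset.mul_sum]
    congr 1
    by_cases hlk : l = k
    · subst hlk; simp
    · have hx1 : ζ ^ ((l : ℤ) - k) ≠ 1 := by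
        intro h
        rw [hζ.zpow_eq_one_iff_dvd] at h
        have hne : (l : ℤ) - k ≠ 0 := by
          simp only [sub_ne_zero]
          exact_mod_cast hlk
        have := Int.le_of_dvd (abs_pos.mpr hne) ((dvd_abs _ _).mpr h)
        have hl' : l < m := Finset.mem_range.mp hl
        have : |(l : ℤ) - k| < m := by
          rw [abs_lt]
          omega
        omega
      rw [geom_sum_eq hx1]
      have : (ζ ^ ((l : ℤ) - k)) ^ m = 1 := by
        rw [← zpow_natCast, ← zpow_mul, mul_comm, zpow_mul, hζ.zpow_eq_one, one_zpow]
      rw [this, sub_self, zero_div, if_neg hlk]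
  rw [Finset.sum_congr rfl inner]
  simp only [mul_ite, mul_zero]
  rw [Finset.sum_ite_eq' (Finset.range m) k]
  simp [Finset.mem_range.mpr hk, mul_comm]

lemma coeff_abs_le (p : Polynomial ℂ) (k : ℕ) :
    ‖p.coeff k‖ ≤ polySupNorm (Metric.closedBall 0 1) p := by
  set K : Set ℂ := Metric.closedBall 0 1 with hK
  have hKc : IsCompact K := ProperSpace.isCompact_closedBall _ _
  set M := polySupNorm K p with hM
  have hle : ∀ z ∈ K, ‖p.eval z‖ ≤ M := fun z hz => le_polySupNorm hKc p hz
  set m := max (p.natDegree + 1) (k + 1) with hm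
  have hm0 : m ≠ 0 := by positivity
  have hdeg : p.natDegree < m := lt_of_lt_of_le (Nat.lt_succ_self _) (le_max_left _ _)
  have hk : k < m := lt_of_lt_of_le (Nat.lt_succ_self _) (le_max_right _ _)
  set ζ : ℂ := Complex.exp (2 * Real.pi * Complex.I / m) with hζdef
  have hζ : IsPrimitiveRoot ζ m := Complex.isPrimitiveRoot_exp m hm0
  have habs : ‖ζ‖ = 1 := by
    rw [hζdef, Complex.norm_exp]
    have : (2 * (Real.pi : ℂ) * Complex.I / m).re = 0 := by
      simp [Complex.div_re]
    rw [this, Real.exp_zero]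
  have key := dft_coeff p hdeg hk hζ
  have hmem : ∀ j : ℕ, ζ ^ j ∈ K := by
    intro j
    rw [hK, Metric.mem_closedBall, dist_zero_right]
    simp [norm_pow, habs]
  have hstep : (m : ℝ) * ‖p.coeff k‖ ≤ (m : ℝ) * M := by
    calc (m : ℝ) * ‖p.coeff k‖
        = ‖(m : ℂ) * p.coeff k‖ := by
          rw [norm_mul, Complex.norm_natCast]
      _ = ‖∑ j ∈ Finset.range m, p.eval (ζ ^ j) * ζ ^ (-((j * k : ℕ) : ℤ))‖ := by
          rw [key]
      _ ≤ ∑ j ∈ Finset.range m, ‖p.eval (ζ ^ j) * ζ ^ (-((j * k : ℕ) : ℤ))‖ := by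
          exact norm_sum_le _ _
      _ = ∑ j ∈ Finset.range m, ‖p.eval (ζ ^ j)‖ := by
          refine Finset.sum_congr rfl fun j _ => ?_
          rw [norm_mul, norm_zpow, habs, one_zpow, mul_one]
      _ ≤ ∑ _j ∈ Finset.range m, M := Finset.sum_le_sum fun j _ => hle _ (hmem j)
      _ = (m : ℝ) * M := by rw [Finset.sum_const, Finset.card_range, nsmul_eq_mul]
  have hmpos : (0 : ℝ) < m := by positivity
  exact le_of_mul_le_mul_left hstep hmpos

lemma gamma_bound {R : ℝ} (hR : 0 < R) (p : Polynomial ℂ) {n : ℕ} (hn : p.natDegree ≤ n) :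
    polySupNorm (Metric.sphere (1:ℂ) R) p
      ≤ ((n:ℝ) + 1) * (R + 1) ^ n * polySupNorm (Metric.closedBall 0 1) p := by
  set M := polySupNorm (Metric.closedBall (0:ℂ) 1) p with hM
  have hM0 : 0 ≤ M := le_trans (norm_nonneg _) (coeff_abs_le p 0)
  have hne : (Metric.sphere (1:ℂ) R).Nonempty := by
    refine ⟨1 + R, ?_⟩
    simp only [Metric.mem_sphere]
    rw [dist_eq_norm]
    simp [abs_of_pos hR]
  apply csSup_le (hne.image _)
  rintro r ⟨z, hz, rfl⟩
  have hzabs : ‖z‖ ≤ R + 1 := by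
    have : z = (z - 1) + 1 := by ring
    calc ‖z‖ = ‖(z - 1) + 1‖ := by rw [← this]
      _ ≤ ‖z - 1‖ + ‖1‖ := norm_add_le _ _
      _ = R + 1 := by
          have hd := Metric.mem_sphere.mp hz
          rw [dist_eq_norm] at hd
          rw [norm_one, hd]
  have hR1 : (1:ℝ) ≤ R + 1 := by linarith
  calc ‖p.eval z‖
      = ‖∑ l ∈ Finset.range (n+1), p.coeff l * z ^ l‖ := by
        rw [eval_eq_sum_range' (lt_of_le_of_lt hn (Nat.lt_succ_self n))]
    _ ≤ ∑ l ∈ Finset.range (n+1), ‖p.coeff l * z ^ l‖ := norm_sum_le _ _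
    _ ≤ ∑ _l ∈ Finset.range (n+1), M * (R + 1) ^ n := by
        refine Finset.sum_le_sum fun l hl => ?_
        rw [norm_mul, norm_pow]
        refine mul_le_mul (coeff_abs_le p l) ?_ (by positivity) hM0
        calc ‖z‖ ^ l ≤ (R + 1) ^ l :=
              pow_le_pow_left₀ (norm_nonneg _) hzabs l
          _ ≤ (R + 1) ^ n :=
              pow_le_pow_right₀ hR1 (Nat.lt_succ_iff.mp (Finset.mem_range.mp hl))
    _ = ((n:ℝ) + 1) * (R + 1) ^ n * M := by
        rw [Finset.sum_const, Finset.card_range, nsmul_eq_mul]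
        push_cast
        ring

/-- with `E` the closed unit disk and `Γ` the circle `|z - 1| = R`, `R > 2`,
the monomial `z^n` has norm ratio `1/(R+1)^n`, and the `n`-th root of the infimum of the
ratios over nonzero polynomials of degree at most `n` tends to `1/(R+1)`. -/
theorem monomial_ratio_and_inf_limit (R : ℝ) (hR : 2 < R)
    (E : Set ℂ) (hEdef : E = Metric.closedBall (0 : ℂ) 1)
    (Γ : Set ℂ) (hΓdef : Γ = Metric.sphere (1 : ℂ) R) :
    (∀ n : ℕ, polySupNorm E (X ^ n) / polySupNorm Γ (X ^ n) = 1 / (R + 1) ^ n) ∧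
    Tendsto (fun n : ℕ =>
        (sInf {r : ℝ | ∃ p : Polynomial ℂ, p ≠ 0 ∧ p.natDegree ≤ n ∧
            r = polySupNorm E p / polySupNorm Γ p}) ^ ((1 : ℝ) / n))
      atTop (nhds (1 / (R + 1))) := by
  subst hEdef hΓdef
  have hRpos : (0:ℝ) < R := by linarith
  have hR1 : (0:ℝ) < R + 1 := by linarith
  have hEc : IsCompact (Metric.closedBall (0:ℂ) 1) := ProperSpace.isCompact_closedBall _ _
  have hΓc : IsCompact (Metric.sphere (1:ℂ) R) := isCompact_sphere _ _
  have hE : ∀ n : ℕ, polySupNorm (Metric.closedBall (0:ℂ) 1) (X ^ n) = 1 := by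
    intro n
    have hg : IsGreatest
        ((fun z => ‖(X ^ n : Polynomial ℂ).eval z‖) '' Metric.closedBall 0 1) 1 := by
      constructor
      · exact ⟨1, by simp, by simp⟩
      · rintro r ⟨z, hz, rfl⟩
        simp only [eval_pow, eval_X, norm_pow]
        have hz1 : ‖z‖ ≤ 1 := by
          rw [Metric.mem_closedBall, dist_zero_right] at hz
          exact hz
        exact pow_le_one₀ (norm_nonneg _) hz1
    exact hg.csSup_eq
  have hΓn : ∀ n : ℕ, polySupNorm (Metric.sphere (1:ℂ) R) (X ^ n) = (R + 1) ^ n := by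
    intro n
    have habs1R : ‖1 + (R:ℂ)‖ = R + 1 := by
      rw [show (1 + (R:ℂ)) = ((1 + R : ℝ) : ℂ) by push_cast; ring, Complex.norm_real,
        Real.norm_of_nonneg (by linarith)]
      ring
    have hg : IsGreatest
        ((fun z => ‖(X ^ n : Polynomial ℂ).eval z‖) '' Metric.sphere (1:ℂ) R)
        ((R + 1) ^ n) := by
      constructor
      · refine ⟨1 + R, ?_, ?_⟩
        · simp only [Metric.mem_sphere]
          rw [dist_eq_norm]
          simp [abs_of_pos hRpos]
        · simp only [eval_pow, eval_X, norm_pow, habs1R]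
      · rintro r ⟨z, hz, rfl⟩
        simp only [eval_pow, eval_X, norm_pow]
        have hzabs : ‖z‖ ≤ R + 1 := by
          have hd := Metric.mem_sphere.mp hz
          rw [dist_eq_norm] at hd
          calc ‖z‖ = ‖(z - 1) + 1‖ := by ring_nf
            _ ≤ ‖z - 1‖ + ‖1‖ := norm_add_le _ _
            _ = R + 1 := by rw [norm_one, hd]
        exact pow_le_pow_left₀ (norm_nonneg _) hzabs n
    exact hg.csSup_eq
  have part1 : ∀ n : ℕ, polySupNorm (Metric.closedBall (0:ℂ) 1) (X ^ n) /
      polySupNorm (Metric.sphere (1:ℂ) R) (X ^ n) = 1 / (R + 1) ^ n := by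
    intro n
    rw [hE n, hΓn n]
  refine ⟨part1, ?_⟩
  set S : ℕ → Set ℝ := fun n => {r : ℝ | ∃ p : Polynomial ℂ, p ≠ 0 ∧ p.natDegree ≤ n ∧
      r = polySupNorm (Metric.closedBall (0:ℂ) 1) p /
        polySupNorm (Metric.sphere (1:ℂ) R) p} with hS
  have hmem : ∀ n : ℕ, (1 / (R + 1) ^ n) ∈ S n := by
    intro n
    exact ⟨X ^ n, pow_ne_zero n X_ne_zero, by simp [natDegree_X_pow], (part1 n).symm⟩
  have hlb : ∀ n : ℕ, ∀ r ∈ S n, 1 / (((n:ℝ) + 1) * (R + 1) ^ n) ≤ r := by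
    rintro n r ⟨p, hp0, hdeg, rfl⟩
    have hMpos := polySupNorm_pos hEc closedBall_infinite hp0
    have hNpos := polySupNorm_pos hΓc (sphere_infinite 1 hRpos) hp0
    have hNle := gamma_bound hRpos p hdeg
    have hC : (0:ℝ) < ((n:ℝ) + 1) * (R + 1) ^ n :=
      mul_pos (by positivity) (pow_pos hR1 n)
    rw [div_le_div_iff₀ hC hNpos]
    nlinarith [hNle]
  have hbdd : ∀ n, BddBelow (S n) := fun n => ⟨_, hlb n⟩
  have hInf_le : ∀ n, sInf (S n) ≤ 1 / (R + 1) ^ n := fun n => csInf_le (hbdd n) (hmem n)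
  have hle_Inf : ∀ n : ℕ, 1 / (((n:ℝ) + 1) * (R + 1) ^ n) ≤ sInf (S n) :=
    fun n => le_csInf ⟨_, hmem n⟩ (hlb n)
  have hroot : ∀ n : ℕ, n ≠ 0 → ((1 / (R + 1) ^ n : ℝ)) ^ ((1:ℝ) / n) = 1 / (R + 1) := by
    intro n hn
    have hn' : ((n:ℝ)) ≠ 0 := Nat.cast_ne_zero.mpr hn
    rw [one_div ((R + 1) ^ n), Real.inv_rpow (pow_nonneg hR1.le n),
      ← Real.rpow_natCast (R + 1) n, ← Real.rpow_mul hR1.le, mul_one_div,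
      div_self hn', Real.rpow_one, one_div]
  have hroot2 : ∀ n : ℕ, n ≠ 0 →
      ((1 / (((n:ℝ) + 1) * (R + 1) ^ n) : ℝ)) ^ ((1:ℝ) / n)
        = (1 / ((n:ℝ) + 1)) ^ ((1:ℝ) / n) * (1 / (R + 1)) := by
    intro n hn
    rw [← one_div_mul_one_div, Real.mul_rpow (by positivity)
      (one_div_nonneg.mpr (pow_nonneg hR1.le n)), hroot n hn]
  have hb : Tendsto (fun n : ℕ => ((n:ℝ) + 1) ^ ((1:ℝ) / ((n:ℝ) + 1))) atTop (nhds 1) :=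
    tendsto_rpow_div.comp (tendsto_atTop_add_const_right atTop 1 tendsto_natCast_atTop_atTop)
  have he : Tendsto (fun n : ℕ => (1:ℝ) + 1 / (n:ℝ)) atTop (nhds 1) := by
    have h0 := (tendsto_const_nhds : Tendsto (fun _ : ℕ => (1:ℝ)) atTop (nhds 1)).add
      tendsto_one_div_atTop_nhds_zero_nat
    simpa using h0
  have hA : Tendsto (fun n : ℕ => ((n:ℝ) + 1) ^ ((1:ℝ) / (n:ℝ))) atTop (nhds 1) := by
    have h1 : Tendsto (fun n : ℕ =>
        (((n:ℝ) + 1) ^ ((1:ℝ) / ((n:ℝ) + 1))) ^ ((1:ℝ) + 1 / (n:ℝ))) atTop (nhds 1) := by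
      have := hb.rpow he (Or.inl one_ne_zero)
      simpa using this
    apply h1.congr'
    filter_upwards [eventually_ge_atTop 1] with n hn
    have hn0 : ((n:ℝ)) ≠ 0 := by
      have : (0:ℝ) < n := by exact_mod_cast hn
      exact this.ne'
    rw [← Real.rpow_mul (by positivity : (0:ℝ) ≤ (n:ℝ) + 1)]
    congr 1
    field_simp
  have hAinv : Tendsto (fun n : ℕ => (1 / ((n:ℝ) + 1)) ^ ((1:ℝ) / (n:ℝ))) atTop (nhds 1) := by
    have h2 := hA.inv₀ one_ne_zero
    simp only [inv_one] at h2
    apply h2.congr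
    intro n
    rw [one_div ((n:ℝ) + 1), Real.inv_rpow (by positivity : (0:ℝ) ≤ (n:ℝ) + 1)]
  have hlow : Tendsto (fun n : ℕ => (1 / ((n:ℝ) + 1)) ^ ((1:ℝ) / (n:ℝ)) * (1 / (R + 1)))
      atTop (nhds (1 / (R + 1))) := by
    have := hAinv.mul_const (1 / (R + 1))
    simpa using this
  apply tendsto_of_tendsto_of_tendsto_of_le_of_le' hlow tendsto_const_nhds
  · filter_upwards [eventually_ge_atTop 1] with n hn
    have hn0 : n ≠ 0 := by omega
    rw [← hroot2 n hn0]
    exact Real.rpow_le_rpow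
      (one_div_nonneg.mpr (mul_nonneg (by positivity) (pow_nonneg hR1.le n)))
      (hle_Inf n) (by positivity)
  · filter_upwards [eventually_ge_atTop 1] with n hn
    have hn0 : n ≠ 0 := by omega
    rw [← hroot n hn0]
    refine Real.rpow_le_rpow ?_ (hInf_le n) (by positivity)
    exact le_trans (one_div_nonneg.mpr
      (mul_nonneg (by positivity) (pow_nonneg hR1.le n))) (hle_Inf n)
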